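/- (Single-step extension preserves coherence, existential form.) Let M₁ be a substitution into S₁ and M₂ a substitution into S₂ with M₁ ⋈_C M₂ where C = S₁ ∩ S₂, and assume |S₂ \ S₁| > |dom(M₂)|. Then for every substitution γ₁ into S₁ with dom(γ₁) disjoint from dom(M₁), there exists a substitution γ₂ into S₂ with dom(γ₂) = dom(γ₁) such that (M₁ ⊎ γ₁) ⋈_C (M₂ ⊎ γ₂). -/

import Mathlib

noncomputable section
open Classical

/-- A substitution: a partial map from variables to letters. -/
def dom {X A : Type*} (σ : X → Option A) : Set X := {x | σ x ≠ none}

def codom {X A : Type*} (σ : X → Option A) : Set A := {a | ∃ x, σ x = some a}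

/-- C-coherence of two substitutions with equal domains. -/
def Coh {X A : Type*} (C : Set A) (σ' σ : X → Option A) : Prop :=
  dom σ' = dom σ ∧
  (∀ x a b, σ' x = some a → σ x = some b →
      (a ∈ C ↔ b ∈ C) ∧ ((a ∈ C ∨ b ∈ C) → a = b)) ∧
  (∀ x y a b a' b', σ' x = some a → σ' y = some b →
      σ x = some a' → σ y = some b' → (a = b ↔ a' = b'))

/-- Union of two substitutions (intended for disjoint domains). -/
def union {X A : Type*} (σ γ : X → Option A) : X → Option A :=
  fun x => match σ x with | some a => some a | none => γ x

/-- Restriction of a substitution to a set of variables. -/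
def restrict {X A : Type*} (σ : X → Option A) (D : Set X) : X → Option A :=
  fun x => if x ∈ D then σ x else none

/-- The singleton substitution {x ↦ a}. -/
def single {X A : Type*} (x : X) (a : A) : X → Option A :=
  fun z => if z = x then some a else none

universe u v
lemma codom_card_le {X A : Type*} {σ : X → Option A} (h : (dom σ).Finite) :
    (codom σ).ncard ≤ (dom σ).ncard := by
  have : Finite ↥(dom σ) := h.to_subtype
  rw [← Nat.card_coe_set_eq, ← Nat.card_coe_set_eq]
  refine Nat.card_le_card_of_injective
    (fun a => (⟨Classical.choose a.2, by simp [dom, Classical.choose_spec a.2]⟩ : ↥(dom σ))) ?_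
  intro a b hab
  have h1 := Classical.choose_spec a.2
  have h2 := Classical.choose_spec b.2
  have : Classical.choose a.2 = Classical.choose b.2 := congrArg Subtype.val hab
  rw [this] at h1
  rw [h1] at h2
  exact Subtype.ext (Option.some_injective _ h2)

lemma codom_finite_aux {X A : Type*} {σ : X → Option A} (h : (dom σ).Finite) :
    (codom σ).Finite := by
  have : Finite ↥(dom σ) := h.to_subtype
  have : Finite ↥(codom σ) :=
    Finite.of_injective
      (fun a => (⟨Classical.choose a.2, by simp [dom, Classical.choose_spec a.2]⟩ : ↥(dom σ)))
      (by
        intro a b hab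
        have h1 := Classical.choose_spec a.2
        have h2 := Classical.choose_spec b.2
        have : Classical.choose a.2 = Classical.choose b.2 := congrArg Subtype.val hab
        rw [this] at h1
        rw [h1] at h2
        exact Subtype.ext (Option.some_injective _ h2))
  exact Set.toFinite _

lemma dom_union_aux {X A : Type*} (σ γ : X → Option A) :
    dom (union σ γ) = dom σ ∪ dom γ := by
  ext x
  cases hx : σ x <;> simp [dom, union, hx]

/-- Single-step extension preserves coherence, existential form. -/
theorem stmt_9 {X : Type u} {A : Type v} (S₁ S₂ : Set A) (C : Set A) (hC : C = S₁ ∩ S₂)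
    (M₁ M₂ : X → Option A)
    (hM₁ : codom M₁ ⊆ S₁) (hM₂ : codom M₂ ⊆ S₂)
    (hcoh : Coh C M₁ M₂)
    (γ₁ : X → Option A) (hγ₁ : codom γ₁ ⊆ S₁)
    (hdisj : dom M₁ ∩ dom γ₁ = ∅)
    (hfin : (dom M₂ ∪ dom γ₁).Finite)
    (hcard : Cardinal.lift.{v} (Cardinal.mk ↥(dom M₂ ∪ dom γ₁)) < Cardinal.lift.{u} (Cardinal.mk ↥(S₂ \ S₁))) :
    ∃ γ₂ : X → Option A, dom γ₂ = dom γ₁ ∧ codom γ₂ ⊆ S₂ ∧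
      Coh C (union M₁ γ₁) (union M₂ γ₂) := by
  classical
  obtain ⟨hdom, h2, h3⟩ := hcoh
  set T : Set A := S₂ \ S₁ with hT
  set W : Set A := codom M₂ with hW
  set V : Set A := codom γ₁ \ (C ∪ codom M₁) with hV
  have hnone : ∀ x, M₁ x = none ↔ M₂ x = none := by
    intro x
    have := Set.ext_iff.mp hdom x
    simp only [dom, Set.mem_setOf_eq] at this
    constructor
    · intro h; by_contra h'; exact (this.mpr h') h
    · intro h; by_contra h'; exact (this.mp h') h
  have hγM : ∀ x a, γ₁ x = some a → M₁ x = none := by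
    intro x a hx
    by_contra h
    have : x ∈ dom M₁ ∩ dom γ₁ := ⟨h, by simp [dom, hx]⟩
    rw [hdisj] at this
    exact this
  -- finiteness facts
  have hfinM₂ : (dom M₂).Finite := hfin.subset Set.subset_union_left
  have hfinγ : (dom γ₁).Finite := hfin.subset Set.subset_union_right
  have hfinW : W.Finite := codom_finite_aux hfinM₂
  have hfinV : V.Finite := (codom_finite_aux hfinγ).subset Set.diff_subset
  -- embedding of V into T \ W
  have hemb : Nonempty (↥V ↪ ↥(T \ W)) := by
    rw [← Cardinal.le_def]
    by_cases hTfin : T.Finite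
    · have hTW : (T \ W).Finite := hTfin.subset Set.diff_subset
      have hVs : Finite ↥V := hfinV.to_subtype
      have hTWs : Finite ↥(T \ W) := hTW.to_subtype
      have hFs : Finite ↥(dom M₂ ∪ dom γ₁) := hfin.to_subtype
      have hTs : Finite ↥T := hTfin.to_subtype
      rw [← Nat.cast_card, ← Nat.cast_card, Nat.cast_le,
        Nat.card_coe_set_eq, Nat.card_coe_set_eq]
      -- numeric computation
      have n4 : (dom M₂ ∪ dom γ₁).ncard < T.ncard := by
        rw [← Nat.cast_card, ← Nat.cast_card,
          Cardinal.lift_natCast, Cardinal.lift_natCast, Nat.cast_lt] at hcard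
        rwa [Nat.card_coe_set_eq, Nat.card_coe_set_eq] at hcard
      have n3 : (dom M₂ ∪ dom γ₁).ncard = (dom M₂).ncard + (dom γ₁).ncard := by
        refine Set.ncard_union_eq ?_ hfinM₂ hfinγ
        rw [Set.disjoint_iff_inter_eq_empty, ← hdom]
        exact hdisj
      have n1 : W.ncard ≤ (dom M₂).ncard := codom_card_le hfinM₂
      have n2 : V.ncard ≤ (dom γ₁).ncard :=
        le_trans (Set.ncard_le_ncard Set.diff_subset (codom_finite_aux hfinγ))
          (codom_card_le hfinγ)
      have n5 : T.ncard ≤ (T \ W).ncard + W.ncard := by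
        calc T.ncard ≤ ((T \ W) ∪ W).ncard :=
              Set.ncard_le_ncard (fun a ha => by
                by_cases h : a ∈ W
                · exact Or.inr h
                · exact Or.inl ⟨ha, h⟩) (hTW.union hfinW)
          _ ≤ (T \ W).ncard + W.ncard := Set.ncard_union_le _ _
      omega
    · have hinf : (T \ W).Infinite := Set.Infinite.diff hTfin hfinW
      have : Infinite ↥(T \ W) := hinf.to_subtype
      exact le_trans hfinV.lt_aleph0.le (Cardinal.aleph0_le_mk _)
  obtain ⟨e⟩ := hemb
  -- the renaming function
  set g : A → A := fun a =>
    if a ∈ C then a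
    else if h : ∃ p : X × A, M₁ p.1 = some a ∧ M₂ p.1 = some p.2 then h.choose.2
    else if hv : a ∈ V then (e ⟨a, hv⟩ : A) else a with hgdef
  have hgC : ∀ a ∈ C, g a = a := by
    intro a ha; simp only [hgdef]; rw [if_pos ha]
  have hchoose : ∀ a x b, M₁ x = some a → M₂ x = some b → a ∉ C → g a = b := by
    intro a x b h1 hb hac
    have hex : ∃ p : X × A, M₁ p.1 = some a ∧ M₂ p.1 = some p.2 := ⟨⟨x, b⟩, h1, hb⟩
    simp only [hgdef]
    rw [if_neg hac, dif_pos hex]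
    obtain ⟨hp1, hp2⟩ := hex.choose_spec
    exact ((h3 x hex.choose.1 a a b hex.choose.2 h1 hp1 hb hp2).mp rfl).symm
  have hVnoex : ∀ a ∈ V, ¬ ∃ p : X × A, M₁ p.1 = some a ∧ M₂ p.1 = some p.2 := by
    rintro a ha ⟨p, hp1, _⟩
    exact ha.2 (Or.inr ⟨p.1, hp1⟩)
  have hVnC : ∀ a ∈ V, a ∉ C := fun a ha h => ha.2 (Or.inl h)
  have hgV : ∀ a (ha : a ∈ V), g a = (e ⟨a, ha⟩ : A) := by
    intro a ha
    simp only [hgdef]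
    rw [if_neg (hVnC a ha), dif_neg (hVnoex a ha), dif_pos ha]
  have hgVmem : ∀ a (ha : a ∈ V), g a ∈ T \ W := by
    intro a ha; rw [hgV a ha]; exact (e ⟨a, ha⟩).2
  -- classification of codom γ₁ values
  have hcases : ∀ a ∈ codom γ₁, a ∈ C ∨
      (∃ x b, M₁ x = some a ∧ M₂ x = some b ∧ a ∉ C) ∨ a ∈ V := by
    intro a ha
    by_cases hac : a ∈ C
    · exact Or.inl hac
    by_cases hm : a ∈ codom M₁
    · obtain ⟨x, hx⟩ := hm
      cases hmx : M₂ x with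
      | none => exact absurd hx (by rw [(hnone x).mpr hmx]; simp)
      | some b => exact Or.inr (Or.inl ⟨x, b, hx, hmx, hac⟩)
    · exact Or.inr (Or.inr ⟨ha, fun h => h.elim hac hm⟩)
  have hgS₂ : ∀ a ∈ codom γ₁, g a ∈ S₂ := by
    intro a ha
    rcases hcases a ha with h | ⟨x, b, h1, hb, hac⟩ | hv
    · rw [hgC a h]; rw [hC] at h; exact h.2
    · rw [hchoose a x b h1 hb hac]; exact hM₂ ⟨x, hb⟩
    · exact ((hgVmem a hv).1).1
  have hgCiff : ∀ a ∈ codom γ₁, (a ∈ C ↔ g a ∈ C) ∧ (a ∈ C → g a = a) := by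
    intro a ha
    rcases hcases a ha with h | ⟨x, b, h1, hb, hac⟩ | hv
    · rw [hgC a h]; exact ⟨Iff.rfl, fun _ => rfl⟩
    · rw [hchoose a x b h1 hb hac]
      have := (h2 x a b h1 hb).1
      exact ⟨this, fun h => absurd h hac⟩
    · have h1 : g a ∉ C := by
        intro h
        rw [hC] at h
        exact ((hgVmem a hv).1).2 h.1
      exact ⟨⟨fun h => absurd h (hVnC a hv), fun h => absurd h h1⟩,
        fun h => absurd h (hVnC a hv)⟩
  have hgW : ∀ a x b, M₁ x = some a → M₂ x = some b → a ∉ C → g a ∈ W := by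
    intro a x b h1 hb hac
    rw [hchoose a x b h1 hb hac]
    exact ⟨x, hb⟩
  -- injectivity of g on codom γ₁
  have hgInj : ∀ a ∈ codom γ₁, ∀ b ∈ codom γ₁, g a = g b → a = b := by
    intro a ha b hb hab
    rcases hcases a ha with h | ⟨x, c, h1, hc, hac⟩ | hv
    · -- a ∈ C
      have hga : g a = a := hgC a h
      have hbC : b ∈ C := (hgCiff b hb).1.mpr (by rw [← hab, hga]; exact h)
      rw [hgC a h, hgC b hbC] at hab; exact hab
    · -- a in codom M₁, a ∉ C
      rcases hcases b hb with h' | ⟨x', c', h1', hc', hac'⟩ | hv'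
      · have : g b = b := hgC b h'
        have : a ∈ C := (hgCiff a ha).1.mpr (by rw [hab, this]; exact h')
        exact absurd this hac
      · rw [hchoose a x c h1 hc hac, hchoose b x' c' h1' hc' hac'] at hab
        exact (h3 x x' a b c c' h1 h1' hc hc').mpr hab
      · exfalso
        have hw : g a ∈ W := hgW a x c h1 hc hac
        have : g b ∈ T \ W := hgVmem b hv'
        rw [hab] at hw
        exact this.2 hw
    · rcases hcases b hb with h' | ⟨x', c', h1', hc', hac'⟩ | hv'
      · have : b ∈ C → False := fun hbc => by
          have : a ∈ C := (hgCiff a ha).1.mpr (by rw [hab, hgC b hbc]; exact hbc)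
          exact hVnC a hv this
        exact absurd h' this
      · exfalso
        have hw : g b ∈ W := hgW b x' c' h1' hc' hac'
        have : g a ∈ T \ W := hgVmem a hv
        rw [← hab] at hw
        exact this.2 hw
      · rw [hgV a hv, hgV b hv'] at hab
        exact congrArg Subtype.val (e.injective (Subtype.ext hab))
  -- cross lemma
  have hcross : ∀ x a c b, M₁ x = some a → M₂ x = some c → b ∈ codom γ₁ →
      (a = b ↔ c = g b) := by
    intro x a c b hxa hxc hb
    rcases hcases b hb with h | ⟨x', c', h1', hc', hbc⟩ | hv
    · rw [hgC b h]
      constructor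
      · intro hab
        have := (h2 x a c hxa hxc).2 (Or.inl (hab ▸ h))
        rw [← this, hab]
      · intro hcb
        have := (h2 x a c hxa hxc).2 (Or.inr (hcb ▸ h))
        rw [this, hcb]
    · rw [hchoose b x' c' h1' hc' hbc]
      exact h3 x x' a b c c' hxa h1' hxc hc'
    · constructor
      · intro hab
        exact absurd (⟨x, hab ▸ hxa⟩ : b ∈ codom M₁) (fun h => hv.2 (Or.inr h))
      · intro hcg
        exfalso
        exact (hgVmem b hv).2 (hcg ▸ ⟨x, hxc⟩)
  -- the substitution γ₂
  refine ⟨fun x => Option.map g (γ₁ x), ?_, ?_, ?_, ?_, ?_⟩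
  · ext x; cases h : γ₁ x <;> simp [dom, h]
  · rintro a ⟨x, hx⟩
    cases h : γ₁ x with
    | none => simp [h] at hx
    | some b =>
      simp only [h, Option.map_some] at hx
      exact (Option.some_injective _ hx) ▸ hgS₂ b ⟨x, h⟩
  · -- dom equality
    rw [dom_union_aux, dom_union_aux, hdom]
    congr 1
    ext x; cases h : γ₁ x <;> simp [dom, h]
  · -- condition 2
    intro x a b ha hb
    cases hx : M₁ x with
    | some a₀ =>
      have hx2 : M₂ x ≠ none := fun h => by simp [(hnone x).mpr h] at hx
      cases hx2' : M₂ x with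
      | none => exact absurd hx2' hx2
      | some b₀ =>
        have ha' : a = a₀ := by simp [union, hx] at ha; exact ha.symm
        have hb' : b = b₀ := by simp [union, hx2'] at hb; exact hb.symm
        subst ha'; subst hb'
        exact h2 x a b hx hx2'
    | none =>
      have hx2 : M₂ x = none := (hnone x).mp hx
      have ha' : γ₁ x = some a := by simpa [union, hx] using ha
      have hb' : Option.map g (γ₁ x) = some b := by simpa [union, hx2] using hb
      rw [ha'] at hb'
      simp only [Option.map_some] at hb'
      have hbg : b = g a := (Option.some_injective _ hb').symm
      subst hbg
      have hmem : a ∈ codom γ₁ := ⟨x, ha'⟩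
      obtain ⟨hiff, heq⟩ := hgCiff a hmem
      refine ⟨hiff, ?_⟩
      rintro (h | h)
      · exact (heq h).symm
      · exact (heq (hiff.mpr h)).symm
  · -- condition 3
    intro x y a b a' b' hxa hyb hxa' hyb'
    -- decode the four values
    have decode : ∀ z c c', union M₁ γ₁ z = some c → union M₂ (fun w => Option.map g (γ₁ w)) z = some c' →
        (M₁ z = some c ∧ M₂ z = some c') ∨
        (γ₁ z = some c ∧ c' = g c ∧ c ∈ codom γ₁) := by
      intro z c c' hc hc'
      cases hz : M₁ z with
      | some c₀ =>
        have hz2 : M₂ z ≠ none := fun h => by simp [(hnone z).mpr h] at hz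
        cases hz2' : M₂ z with
        | none => exact absurd hz2' hz2
        | some c₀' =>
          have hcc : c₀ = c := by
            have : (some c₀ : Option A) = some c := by simpa [union, hz] using hc
            exact Option.some_injective _ this
          have hcc' : c₀' = c' := by
            have : (some c₀' : Option A) = some c' := by simpa [union, hz2'] using hc'
            exact Option.some_injective _ this
          subst hcc; subst hcc'
          exact Or.inl ⟨rfl, rfl⟩
      | none =>
        have hz2 : M₂ z = none := (hnone z).mp hz
        have hγ : γ₁ z = some c := by simpa [union, hz] using hc
        have hγ' : Option.map g (γ₁ z) = some c' := by simpa [union, hz2] using hc'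
        rw [hγ] at hγ'
        simp only [Option.map_some] at hγ'
        exact Or.inr ⟨hγ, (Option.some_injective _ hγ').symm, ⟨z, hγ⟩⟩
    rcases decode x a a' hxa hxa' with ⟨hm1, hm2⟩ | ⟨hg1, hga, hmem⟩ <;>
      rcases decode y b b' hyb hyb' with ⟨hm1', hm2'⟩ | ⟨hg1', hgb, hmem'⟩
    · exact h3 x y a b a' b' hm1 hm1' hm2 hm2'
    · subst hgb
      exact hcross x a a' b hm1 hm2 hmem'
    · subst hga
      have := hcross y b b' a hm1' hm2' hmem
      constructor
      · intro h; exact (this.mp h.symm).symm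
      · intro h; exact (this.mpr h.symm).symm
    · subst hga; subst hgb
      exact ⟨fun h => congrArg g h, fun h => hgInj a hmem b hmem' h⟩
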